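/- arXiv:1909.09886 — 4 statements merged into one kernel-verified Lean document; each statement's English description precedes it below -/
import Mathlib

section
/- Let (X,d) be a metric space, A ⊆ X, M ⊆ X, Ω = M ∩ A nonempty, and let φ : X → [0,∞) satisfy φ(x) = 0 iff x ∈ M. Suppose x* ∈ Ω is a local minimizer of a function I : X → ℝ on Ω, that I is Lipschitz continuous with constant L > 0 on a ball B(x*, r₀), and that there exist r > 0 and a > 0 with φ(x) ≥ a · dist(x, Ω) for all x ∈ B(x*, r) ∩ A. Then for every λ ≥ L/a the point x* is a local minimizer of the penalty function Φ_λ(x) = I(x) + λ φ(x) on A. -/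
/-- Exact penalty: local exactness (Theorem on local exactness, metric space setting). -/
theorem stmt0 {X : Type*} [MetricSpace X] (A M : Set X) (I φ : X → ℝ)
    (Ω : Set X) (hΩ : Ω = M ∩ A) (hne : Ω.Nonempty)
    (hφ0 : ∀ x, 0 ≤ φ x) (hφM : ∀ x, φ x = 0 ↔ x ∈ M)
    (xs : X) (hxs : xs ∈ Ω) (hloc : IsLocalMinOn I Ω xs)
    (L r₀ : ℝ) (hL : 0 < L) (hr₀ : 0 < r₀)
    (hlip : ∀ x ∈ Metric.closedBall xs r₀, ∀ y ∈ Metric.closedBall xs r₀,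
      |I x - I y| ≤ L * dist x y)
    (r a : ℝ) (hr : 0 < r) (ha : 0 < a)
    (herr : ∀ x ∈ Metric.closedBall xs r ∩ A, a * Metric.infDist x Ω ≤ φ x) :
    ∀ lam : ℝ, L / a ≤ lam → IsLocalMinOn (fun x => I x + lam * φ x) A xs := by
  intro lam hlam
  obtain ⟨ε, hε, hmin⟩ := Metric.mem_nhdsWithin_iff.mp hloc
  set δ : ℝ := min (min r r₀) ε / 3 with hδdef
  have hδ : 0 < δ := by positivity
  have hδr : 3 * δ ≤ r := by
    have : min (min r r₀) ε ≤ r := le_trans (min_le_left _ _) (min_le_left _ _)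
    simp only [hδdef]; linarith
  have hδr₀ : 3 * δ ≤ r₀ := by
    have : min (min r r₀) ε ≤ r₀ := le_trans (min_le_left _ _) (min_le_right _ _)
    simp only [hδdef]; linarith
  have hδε : 3 * δ ≤ ε := by
    have : min (min r r₀) ε ≤ ε := min_le_right _ _
    simp only [hδdef]; linarith
  have hφxs : φ xs = 0 := (hφM xs).mpr ((hΩ ▸ hxs : xs ∈ M ∩ A)).1
  have hlam0 : 0 ≤ lam := le_trans (by positivity) hlam
  have hla : L ≤ lam * a := by
    have := (div_le_iff₀ ha).mp hlam
    linarith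
  rw [IsLocalMinOn, IsMinFilter, Filter.eventually_iff, Metric.mem_nhdsWithin_iff]
  refine ⟨δ, hδ, fun x ⟨hx, hxA⟩ => ?_⟩
  replace hx : dist x xs < δ := Metric.mem_ball.mp hx
  show I xs + lam * φ xs ≤ I x + lam * φ x
  rw [hφxs, mul_zero, add_zero]
  set d := Metric.infDist x Ω with hddef
  have hd0 : 0 ≤ d := Metric.infDist_nonneg
  have hdδ : d ≤ δ := le_trans (Metric.infDist_le_dist_of_mem hxs) (le_of_lt hx)
  have hφx : a * d ≤ φ x := herr x ⟨Metric.mem_closedBall.mpr (by linarith [le_of_lt hx]), hxA⟩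
  refine le_of_forall_pos_le_add fun η hη => ?_
  set e : ℝ := min δ (η / L) with hedef
  have he : 0 < e := lt_min hδ (by positivity)
  have heδ : e ≤ δ := min_le_left _ _
  have heη : L * e ≤ η := by
    have : e ≤ η / L := min_le_right _ _
    calc L * e ≤ L * (η / L) := by nlinarith
    _ = η := by field_simp
  obtain ⟨y, hyΩ, hxy⟩ := (Metric.infDist_lt_iff hne).mp (by linarith : Metric.infDist x Ω < d + e)
  have hyxs : dist y xs < 3 * δ := by
    have := dist_triangle y x xs
    rw [dist_comm y x] at this
    linarith [le_of_lt hx]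
  have hIxs : I xs ≤ I y := hmin ⟨Metric.mem_ball.mpr (by linarith), hyΩ⟩
  have hyball : y ∈ Metric.closedBall xs r₀ := Metric.mem_closedBall.mpr (by linarith)
  have hxball : x ∈ Metric.closedBall xs r₀ := Metric.mem_closedBall.mpr (by linarith [le_of_lt hx])
  have hlipxy : I y - I x ≤ L * dist y x := le_trans (le_abs_self _) (hlip y hyball x hxball)
  rw [dist_comm y x] at hlipxy
  have h1 : L * dist x y ≤ L * (d + e) := by nlinarith
  have h2 : L * d ≤ lam * (a * d) := by nlinarith
  have h3 : lam * (a * d) ≤ lam * φ x := by nlinarith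
  linarith
end

section
/- Let (X,d) be a metric space, A ⊆ X, Ω ⊆ A, x ∈ A \ Ω, and let φ : X → [0,∞) and I : X → ℝ be given. Suppose I is Lipschitz continuous on A with constant L > 0 and the rate of steepest descent of φ with respect to A at x satisfies φ^↓_A(x) ≤ −a for some a > 0. Then for every λ > 2L/a the rate of steepest descent of Φ_λ = I + λφ with respect to A at x is strictly negative; in particular x is not an inf-stationary point of Φ_λ on A. -/
open Filter

/-- If `I` is Lipschitz on `A` with constant `L` and the rate of steepest descent of
`φ` w.r.t. `A` at `x ∈ A \ Ω` is at most `−a`, then for `λ > 2L/a` the rate of steepest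
descent of `Φ_λ = I + λφ` at `x` is strictly negative; in particular `x` is not an
inf-stationary point of `Φ_λ` on `A`. (Rates of steepest descent are liminfs in
`ℝ ∪ {±∞}`, i.e. `EReal`.) -/
theorem stmt3 {X : Type*} [MetricSpace X] (A Ω : Set X) (I φ : X → ℝ)
    (x : X) (hx : x ∈ A) (hxΩ : x ∉ Ω)
    (hφ0 : ∀ y, 0 ≤ φ y) (hφΩ : ∀ y ∈ A, (φ y = 0 ↔ y ∈ Ω))
    (L : ℝ) (hL : 0 < L)
    (hlip : ∀ y ∈ A, ∀ z ∈ A, |I y - I z| ≤ L * dist y z)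
    (a : ℝ) (ha : 0 < a)
    (hdesc : Filter.liminf (fun y => (((φ y - φ x) / dist y x : ℝ) : EReal))
      (nhdsWithin x (A \ {x})) ≤ ((-a : ℝ) : EReal)) :
    ∀ lam : ℝ, 2 * L / a < lam →
      Filter.liminf
        (fun y => ((((I y + lam * φ y) - (I x + lam * φ x)) / dist y x : ℝ) : EReal))
        (nhdsWithin x (A \ {x})) < (0 : EReal) ∧
      ¬ (0 : EReal) ≤ Filter.liminf
        (fun y => ((((I y + lam * φ y) - (I x + lam * φ x)) / dist y x : ℝ) : EReal))
        (nhdsWithin x (A \ {x})) := by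

  intro lam hlam
  have hlam0 : 0 < lam := lt_of_le_of_lt (by positivity) hlam
  have hmem : ∀ᶠ y in nhdsWithin x (A \ {x}), y ∈ A \ {x} := eventually_mem_nhdsWithin
  have h1 : Filter.liminf (fun y => (((φ y - φ x) / dist y x : ℝ) : EReal))
      (nhdsWithin x (A \ {x})) < ((-a/2 : ℝ) : EReal) :=
    lt_of_le_of_lt hdesc (by exact_mod_cast (by linarith : (-a : ℝ) < -a/2))
  have h2 : ∃ᶠ y in nhdsWithin x (A \ {x}),
      (((φ y - φ x) / dist y x : ℝ) : EReal) < ((-a/2 : ℝ) : EReal) :=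
    Filter.frequently_lt_of_liminf_lt (by isBoundedDefault) h1
  have key : ∃ᶠ y in nhdsWithin x (A \ {x}),
      ((((I y + lam * φ y) - (I x + lam * φ x)) / dist y x : ℝ) : EReal)
        ≤ ((L - lam * a / 2 : ℝ) : EReal) := by
    refine (h2.and_eventually hmem).mono ?_
    rintro y ⟨hq, hyA, hyx⟩
    have hd : 0 < dist y x := dist_pos.mpr (by simpa using hyx)
    have hq' : (φ y - φ x) / dist y x < -a/2 := by exact_mod_cast hq
    have hI : (I y - I x) / dist y x ≤ L := by
      rw [div_le_iff₀ hd]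
      calc I y - I x ≤ |I y - I x| := le_abs_self _
        _ ≤ L * dist y x := hlip y hyA x hx
    have heq : ((I y + lam * φ y) - (I x + lam * φ x)) / dist y x
        = (I y - I x) / dist y x + lam * ((φ y - φ x) / dist y x) := by
      field_simp; ring
    have : ((I y + lam * φ y) - (I x + lam * φ x)) / dist y x ≤ L - lam * a / 2 := by
      rw [heq]; nlinarith
    exact_mod_cast this
  have hlim : Filter.liminf
      (fun y => ((((I y + lam * φ y) - (I x + lam * φ x)) / dist y x : ℝ) : EReal))
      (nhdsWithin x (A \ {x})) ≤ ((L - lam * a / 2 : ℝ) : EReal) :=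
    Filter.liminf_le_of_frequently_le' key
  have hc : ((L - lam * a / 2 : ℝ) : EReal) < (0 : EReal) := by
    have h2L : 2 * L < lam * a := (div_lt_iff₀ ha).mp hlam
    have : L - lam * a / 2 < 0 := by linarith
    exact_mod_cast this
  exact ⟨lt_of_le_of_lt hlim hc, not_le.mpr (lt_of_le_of_lt hlim hc)⟩
end

section
/- Let X be a normed space, A ⊆ X convex, f : X → ℝ convex, and suppose there exists x̂ ∈ A with f(x̂) ≤ η for some η < 0. Then for every x ∈ A with f(x) > 0, setting d = x̂ − x (so d ≠ 0), one has limsup_{α → 0+} (max{f(x + α d), 0} − max{f(x),0})/α ≤ η. Consequently the rate of steepest descent of f⁺ = max{f, 0} with respect to A at x is at most η/‖x̂ − x‖. -/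
open Filter

/-- Slater-type descent estimate for convex constraints: if `f(x̂) ≤ η < 0` for some
`x̂ ∈ A` and `f(x) > 0` at `x ∈ A`, then along the direction `d = x̂ − x` the upper
Dini difference quotient of `f⁺ = max{f,0}` is at most `η`, and hence the rate of
steepest descent of `f⁺` w.r.t. `A` at `x` is at most `η/‖x̂ − x‖`. -/
theorem stmt5 {X : Type*} [NormedAddCommGroup X] [NormedSpace ℝ X]
    (A : Set X) (hA : Convex ℝ A) (f : X → ℝ) (hf : ConvexOn ℝ Set.univ f)
    (xhat : X) (hxhat : xhat ∈ A) (η : ℝ) (hη : η < 0) (hfhat : f xhat ≤ η)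
    (x : X) (hx : x ∈ A) (hfx : 0 < f x) :
    xhat - x ≠ 0 ∧
    Filter.limsup
      (fun α : ℝ => (((max (f (x + α • (xhat - x))) 0 - max (f x) 0) / α : ℝ) : EReal))
      (nhdsWithin 0 (Set.Ioi (0 : ℝ))) ≤ ((η : ℝ) : EReal) ∧
    Filter.liminf
      (fun y => (((max (f y) 0 - max (f x) 0) / ‖y - x‖ : ℝ) : EReal))
      (nhdsWithin x (A \ {x})) ≤ ((η / ‖xhat - x‖ : ℝ) : EReal) := by
  have hd : xhat - x ≠ 0 := by
    intro h
    rw [sub_eq_zero] at h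
    rw [h] at hfhat
    linarith
  have hnd : 0 < ‖xhat - x‖ := norm_pos_iff.mpr hd
  have hnegη : 0 < -η := by linarith
  have hεpos : 0 < min 1 (f x / (-η)) := lt_min one_pos (div_pos hfx hnegη)
  have key : ∀ α : ℝ, α ∈ Set.Ioo 0 (min 1 (f x / (-η))) →
      max (f (x + α • (xhat - x))) 0 - max (f x) 0 ≤ α * η := by
    intro α hα
    obtain ⟨hα0, hαm⟩ := hα
    have hα1 : α ≤ 1 := le_of_lt (lt_of_lt_of_le hαm (min_le_left _ _))
    have hαfx : α < f x / (-η) := lt_of_lt_of_le hαm (min_le_right _ _)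
    have hconv : f ((1 - α) • x + α • xhat) ≤ (1 - α) * f x + α * f xhat :=
      hf.2 (Set.mem_univ x) (Set.mem_univ xhat) (by linarith) hα0.le (by ring)
    have heq : (1 - α) • x + α • xhat = x + α • (xhat - x) := by
      rw [smul_sub, sub_smul, one_smul]; abel
    rw [heq] at hconv
    have h1 : f (x + α • (xhat - x)) ≤ f x + α * η := by nlinarith
    have h2 : 0 < f x + α * η := by
      have : α * (-η) < f x := (lt_div_iff₀ hnegη).mp hαfx
      nlinarith
    have h3 : max (f (x + α • (xhat - x))) 0 ≤ f x + α * η :=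
      max_le h1 h2.le
    have hmx : max (f x) 0 = f x := max_eq_left hfx.le
    rw [hmx]; linarith
  have hmem : Set.Ioo (0:ℝ) (min 1 (f x / (-η))) ∈ nhdsWithin 0 (Set.Ioi 0) :=
    Ioo_mem_nhdsGT_of_mem ⟨le_refl 0, hεpos⟩
  refine ⟨hd, ?_, ?_⟩
  · apply Filter.limsup_le_of_le (by isBoundedDefault)
    filter_upwards [hmem] with α hα
    have hq : (max (f (x + α • (xhat - x))) 0 - max (f x) 0) / α ≤ η := by
      rw [div_le_iff₀ hα.1]
      calc max (f (x + α • (xhat - x))) 0 - max (f x) 0 ≤ α * η := key α hα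
        _ = η * α := by ring
    exact EReal.coe_le_coe_iff.mpr hq
  · set g : ℝ → X := fun α => x + α • (xhat - x) with hg
    have htend : Tendsto g (nhdsWithin 0 (Set.Ioi 0)) (nhdsWithin x (A \ {x})) := by
      rw [tendsto_nhdsWithin_iff]
      constructor
      · have hc : Continuous g := continuous_const.add (continuous_id.smul continuous_const)
        have : g 0 = x := by simp [hg]
        exact (hc.tendsto' 0 x this).mono_left nhdsWithin_le_nhds
      · filter_upwards [Ioo_mem_nhdsGT_of_mem (⟨le_refl 0, one_pos⟩ : (0:ℝ) ∈ Set.Ico 0 1)]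
          with α hα
        constructor
        · have heq : (1 - α) • x + α • xhat = g α := by
            simp only [hg, smul_sub, sub_smul, one_smul]; abel
          rw [← heq]
          exact hA hx hxhat (by linarith [hα.2]) hα.1.le (by ring)
        · simp only [Set.mem_singleton_iff, hg]
          intro hcon
          have : α • (xhat - x) = 0 := by
            have := hcon
            rwa [add_eq_left] at this
          exact hd ((smul_eq_zero.mp this).resolve_left (ne_of_gt hα.1))
    calc Filter.liminf
          (fun y => (((max (f y) 0 - max (f x) 0) / ‖y - x‖ : ℝ) : EReal))
          (nhdsWithin x (A \ {x}))
        ≤ Filter.liminf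
          (fun y => (((max (f y) 0 - max (f x) 0) / ‖y - x‖ : ℝ) : EReal))
          (Filter.map g (nhdsWithin 0 (Set.Ioi 0))) := by
          apply Filter.liminf_le_liminf_of_le htend
      _ = Filter.liminf
          (fun α : ℝ => (((max (f (g α)) 0 - max (f x) 0) / ‖g α - x‖ : ℝ) : EReal))
          (nhdsWithin 0 (Set.Ioi 0)) := (Filter.liminf_comp _ g _).symm
      _ ≤ Filter.limsup
          (fun α : ℝ => (((max (f (g α)) 0 - max (f x) 0) / ‖g α - x‖ : ℝ) : EReal))
          (nhdsWithin 0 (Set.Ioi 0)) := Filter.liminf_le_limsup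
      _ ≤ ((η / ‖xhat - x‖ : ℝ) : EReal) := by
          apply Filter.limsup_le_of_le (by isBoundedDefault)
          filter_upwards [hmem] with α hα
          have hnorm : ‖g α - x‖ = α * ‖xhat - x‖ := by
            simp only [hg, add_sub_cancel_left, norm_smul, Real.norm_eq_abs,
              abs_of_pos hα.1]
          have hq : (max (f (g α)) 0 - max (f x) 0) / ‖g α - x‖ ≤ η / ‖xhat - x‖ := by
            rw [hnorm, div_le_div_iff₀ (mul_pos hα.1 hnd) hnd]
            calc (max (f (g α)) 0 - max (f x) 0) * ‖xhat - x‖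
                ≤ (α * η) * ‖xhat - x‖ := by
                  apply mul_le_mul_of_nonneg_right (key α hα) hnd.le
              _ = η * (α * ‖xhat - x‖) := by ring
          exact EReal.coe_le_coe_iff.mpr hq
end

section
/- For each n ∈ ℕ, let u_n : [0,1] → ℝ² be defined by u_n(t) = (n, 0) for t ∈ [0, 1/n²] and u_n(t) = (0,0) otherwise (interpreting the control as the scalar n·1_{[0,1/n²]}). Then ‖u_n‖_{L²(0,1)} = 1 and the solution of ẋ¹ = 1, ẋ² = u_n, x(0) = (0,0), is x_n(t) = (t, min{nt, 1/n}), so that max_{t∈[0,1]} x_n²(t) = 1/n. Consequently, for every λ ≥ 0 there exists n with −∫₀¹ u_n(t)² dt + λ max_{t∈[0,1]} max{x_n²(t),0} = −1 + λ/n < 0. -/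
open MeasureTheory intervalIntegral

lemma indic_int (c a b : ℝ) (ha : 0 ≤ a) (hb : 0 ≤ b) :
    ∫ t in (0:ℝ)..b, (Set.Icc 0 a).indicator (fun _ => c) t = c * min b a := by
  rw [intervalIntegral.integral_of_le hb,
    MeasureTheory.setIntegral_indicator measurableSet_Icc]
  have h : Set.Ioc (0:ℝ) b ∩ Set.Icc 0 a = Set.Ioc 0 (min b a) := by
    ext x
    simp only [Set.mem_inter_iff, Set.mem_Ioc, Set.mem_Icc, le_min_iff]
    constructor
    · rintro ⟨⟨h1, h2⟩, _, h4⟩; exact ⟨h1, h2, h4⟩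
    · rintro ⟨h1, h2, h3⟩; exact ⟨⟨h1, h2⟩, le_of_lt h1, h3⟩
  rw [h, MeasureTheory.setIntegral_const, measureReal_def, Real.volume_Ioc, sub_zero,
    ENNReal.toReal_ofReal (le_min hb ha), smul_eq_mul]
  ring

/-- The counterexample controls `u_n = n·1_{[0,1/n²]}`: unit `L²` norm, trajectory
`x_n²(t) = min{nt, 1/n}` with maximal constraint violation `1/n`, so for every
`λ ≥ 0` there is `n` with penalized value `−1 + λ/n < 0`. -/
theorem stmt12 (u : ℕ → ℝ → ℝ)
    (hu : ∀ (n : ℕ) (t : ℝ),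
      u n t = if t ∈ Set.Icc (0 : ℝ) (1 / (n : ℝ) ^ 2) then (n : ℝ) else 0) :
    (∀ n : ℕ, 1 ≤ n → ∫ t in (0 : ℝ)..1, (u n t) ^ 2 = 1) ∧
    (∀ n : ℕ, 1 ≤ n → ∀ t ∈ Set.Icc (0 : ℝ) 1,
      ∫ τ in (0 : ℝ)..t, u n τ = min ((n : ℝ) * t) (1 / (n : ℝ))) ∧
    (∀ n : ℕ, 1 ≤ n →
      sSup ((fun t => max (min ((n : ℝ) * t) (1 / (n : ℝ))) 0) '' Set.Icc (0 : ℝ) 1)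
        = 1 / (n : ℝ)) ∧
    (∀ lam : ℝ, 0 ≤ lam → ∃ n : ℕ, 1 ≤ n ∧
      -(∫ t in (0 : ℝ)..1, (u n t) ^ 2) + lam * (1 / (n : ℝ)) = -1 + lam / (n : ℝ) ∧
      -1 + lam / (n : ℝ) < 0) := by
  have hsq : ∀ n : ℕ, 1 ≤ n → ∫ t in (0 : ℝ)..1, (u n t) ^ 2 = 1 := by
    intro n hn
    have hn1 : (1:ℝ) ≤ (n:ℝ) := by exact_mod_cast hn
    have hnpos : (0:ℝ) < (n:ℝ) := by linarith
    have ha : (0:ℝ) ≤ 1 / (n:ℝ)^2 := by positivity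
    have heq : ∀ t : ℝ, (u n t) ^ 2 =
        (Set.Icc (0:ℝ) (1 / (n:ℝ)^2)).indicator (fun _ => (n:ℝ)^2) t := by
      intro t
      rw [hu, Set.indicator_apply]
      split_ifs <;> ring
    simp only [heq]
    rw [indic_int _ _ _ ha zero_le_one]
    have hle : 1 / (n:ℝ)^2 ≤ 1 := by
      rw [div_le_one (by positivity)]; nlinarith
    rw [min_eq_right hle]
    field_simp
  refine ⟨hsq, ?_, ?_, ?_⟩
  · intro n hn t ht
    have hn1 : (1:ℝ) ≤ (n:ℝ) := by exact_mod_cast hn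
    have hnpos : (0:ℝ) < (n:ℝ) := by linarith
    have ha : (0:ℝ) ≤ 1 / (n:ℝ)^2 := by positivity
    have heq : ∀ τ : ℝ, u n τ =
        (Set.Icc (0:ℝ) (1 / (n:ℝ)^2)).indicator (fun _ => (n:ℝ)) τ := by
      intro τ; rw [hu, Set.indicator_apply]
    simp only [heq]
    rw [indic_int _ _ _ ha ht.1]
    rcases le_total t (1 / (n:ℝ)^2) with h | h
    · rw [min_eq_left h, min_eq_left]
      rw [mul_comm]
      calc t * (n:ℝ) ≤ 1 / (n:ℝ)^2 * (n:ℝ) := by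
            exact mul_le_mul_of_nonneg_right h hnpos.le
        _ = 1 / (n:ℝ) := by field_simp
    · rw [min_eq_right h, min_eq_right]
      · field_simp
      · calc (1:ℝ) / (n:ℝ) = (n:ℝ) * (1 / (n:ℝ)^2) := by field_simp
          _ ≤ (n:ℝ) * t := by exact mul_le_mul_of_nonneg_left h hnpos.le
  · intro n hn
    have hn1 : (1:ℝ) ≤ (n:ℝ) := by exact_mod_cast hn
    have hnpos : (0:ℝ) < (n:ℝ) := by linarith
    apply IsGreatest.csSup_eq
    constructor
    · refine ⟨1, Set.mem_Icc.mpr ⟨zero_le_one, le_refl 1⟩, ?_⟩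
      have h1 : (1:ℝ) / (n:ℝ) ≤ (n:ℝ) * 1 := by
        rw [mul_one, div_le_iff₀ hnpos]; nlinarith
      show max (min ((n:ℝ) * 1) (1 / (n:ℝ))) 0 = 1 / (n:ℝ)
      rw [min_eq_right h1, max_eq_left (by positivity)]
    · rintro y ⟨t, _, rfl⟩
      exact max_le (min_le_right _ _) (by positivity)
  · intro lam hlam
    refine ⟨Nat.floor lam + 1, Nat.le_add_left 1 _, ?_, ?_⟩
    · rw [hsq _ (Nat.le_add_left 1 _)]
      rw [mul_one_div]
    · have hnpos : (0:ℝ) < ((Nat.floor lam + 1 : ℕ) : ℝ) := by positivity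
      have hlt : lam < ((Nat.floor lam + 1 : ℕ) : ℝ) := by
        push_cast
        exact Nat.lt_floor_add_one lam
      have : lam / ((Nat.floor lam + 1 : ℕ) : ℝ) < 1 := by
        rw [div_lt_one hnpos]; exact hlt
      linarith
end
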